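/- Let u solve the Λ-NSE in the sense that for each Fourier mode ξ with |ξ| > 2Λ(t₀) the nonlinearity vanishes for times ≥ t₀ (because the truncation frequency Λ is decreasing). Then for |ξ| > 2Λ(t₀) and τ ≥ t₀, the Fourier coefficient satisfies û(τ, ξ) = û(t₀, ξ) e^{−ν|ξ|²(τ−t₀)}. Consequently, for any s ≥ 0 and τ ≥ (3/2)t₀, ‖u(τ)‖²_{Ḣˢ} ≤ C(Λ(t₀)^{2s} + t₀^{−s})‖v₀‖²_{L²}. -/

import Mathlib

open MeasureTheory Filter
open scoped ENNReal BigOperators ComplexConjugate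

noncomputable section

/-- The 3-torus `𝕋³ = (ℝ/ℤ)³`. -/
abbrev T3 : Type := Fin 3 → AddCircle (1 : ℝ)

/-- Fourier coefficient of `u : 𝕋³ → ℂ` at frequency `ξ ∈ ℤ³`. -/
noncomputable def fc (u : T3 → ℂ) (ξ : Fin 3 → ℤ) : ℂ :=
  ∫ x : T3, (∏ i, conj (fourier (ξ i) (x i))) * u x

/-- Euclidean norm on `ℝ³`. -/
def enorm3 (x : Fin 3 → ℝ) : ℝ := Real.sqrt (∑ i, (x i)^2)

/-- Euclidean norm of a frequency `ξ ∈ ℤ³`. -/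
def nrmZ (ξ : Fin 3 → ℤ) : ℝ := enorm3 (fun i => (ξ i : ℝ))

/- ### Auxiliary lemmas -/

lemma nrmZ_nonneg (ξ : Fin 3 → ℤ) : 0 ≤ nrmZ ξ := Real.sqrt_nonneg _

lemma circle_orth (m n : ℤ) :
    ∫ x : AddCircle (1:ℝ), conj (fourier m x) * fourier n x = if m = n then 1 else 0 := by
  haveI : Fact (0 < (1:ℝ)) := ⟨one_pos⟩
  have h := (orthonormal_iff_ite.mp (@orthonormal_fourier 1 _)) m n
  rw [ContinuousMap.inner_toLp (@AddCircle.haarAddCircle 1 _) (fourier m) (fourier n)] at h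
  have hv : (volume : Measure (AddCircle (1:ℝ))) = AddCircle.haarAddCircle := by
    rw [AddCircle.volume_eq_smul_haarAddCircle]; simp
  rw [hv, ← h]; congr 1; ext x; ring

/-- The product Fourier character on the 3-torus as a continuous map. -/
noncomputable def eC (ξ : Fin 3 → ℤ) : C(T3, ℂ) :=
  ⟨fun x => ∏ i, fourier (ξ i) (x i), by
    apply continuous_finset_prod
    exact fun i _ => (map_continuous (fourier (ξ i))).comp (continuous_apply i)⟩

/-- The product Fourier character as an element of `L²(𝕋³)`. -/
noncomputable def EL (ξ : Fin 3 → ℤ) : Lp ℂ 2 (volume : Measure T3) :=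
  ContinuousMap.toLp (E := ℂ) 2 volume ℂ (eC ξ)

lemma EL_orthonormal : Orthonormal ℂ EL := by
  rw [orthonormal_iff_ite]
  intro ξ η
  rw [EL, EL, ContinuousMap.inner_toLp]
  have h : ∀ x : T3, eC η x * conj (eC ξ x)
      = ∏ i, (conj (fourier (ξ i) (x i)) * fourier (η i) (x i)) := by
    intro x
    rw [mul_comm]
    simp only [eC, ContinuousMap.coe_mk, map_prod, Finset.prod_mul_distrib]
  simp_rw [h]
  rw [MeasureTheory.volume_pi, MeasureTheory.integral_fintype_prod_eq_prod (ι := Fin 3)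
    (f := fun i (t : AddCircle (1:ℝ)) => conj (fourier (ξ i) t) * fourier (η i) t)]
  simp_rw [circle_orth]
  by_cases h : ξ = η
  · subst h; simp
  · rw [if_neg h]
    obtain ⟨i, hi⟩ := Function.ne_iff.mp h
    exact Finset.prod_eq_zero (Finset.mem_univ i) (if_neg hi)

lemma fc_eq_inner (u : T3 → ℂ) (hu : MemLp u 2 (volume : Measure T3)) (ξ : Fin 3 → ℤ) :
    fc u ξ = inner ℂ (EL ξ) (hu.toLp u) := by
  rw [L2.inner_def]
  simp_rw [RCLike.inner_apply]
  refine (integral_congr_ae ?_).symm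
  filter_upwards [ContinuousMap.coeFn_toLp (volume : Measure T3) (𝕜 := ℂ) (p := 2) (eC ξ),
    hu.coeFn_toLp] with x h1 h2
  simp only [EL]
  rw [h1, h2]
  simp [eC, map_prod]
  ring

/-- Scalar linear ODE uniqueness: if `f' = -c f` on `[t₀, ∞)` then `f` decays exponentially. -/
lemma ode_exp {f : ℝ → ℂ} {c t₀ : ℝ}
    (hf : ∀ τ, t₀ ≤ τ → HasDerivAt f (-(c : ℂ) * f τ) τ) {τ : ℝ} (hτ : t₀ ≤ τ) :
    f τ = Complex.exp (-((c : ℂ) * ((τ : ℂ) - (t₀ : ℂ)))) * f t₀ := by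
  set g : ℝ → ℂ := fun τ' => Complex.exp ((c : ℂ) * ((τ' : ℂ) - (t₀ : ℂ))) * f τ' with hg_def
  have hg : ∀ x, t₀ ≤ x → HasDerivAt g 0 x := by
    intro x hx
    have h1 : HasDerivAt (fun τ' : ℝ => ((c : ℂ) * ((τ' : ℂ) - (t₀ : ℂ)))) (c : ℂ) x := by
      simpa using ((Complex.ofRealCLM.hasDerivAt (x := x)).sub_const ((t₀ : ℝ) : ℂ)).const_mul (c : ℂ)
    have h2 := h1.cexp
    have h3 := hf x hx
    have h4 := h2.mul h3
    exact h4.congr_deriv (by ring)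
  have hconst := constant_of_has_deriv_right_zero (f := g) (a := t₀) (b := τ)
    (fun x hx => (hg x hx.1).continuousAt.continuousWithinAt)
    (fun x hx => (hg x hx.1).hasDerivWithinAt)
  have hgτ : g τ = g t₀ := hconst τ (Set.right_mem_Icc.mpr hτ)
  have key : Complex.exp ((c : ℂ) * ((τ : ℂ) - (t₀ : ℂ))) * f τ = f t₀ := by
    have h5 : g τ = g t₀ := hgτ
    simp only [hg_def] at h5
    rw [h5]; simp
  rw [← key, ← mul_assoc, ← Complex.exp_add, neg_add_cancel, Complex.exp_zero, one_mul]

/-- `t^p e^{-t} ≤ p^p` for `p, t ≥ 0`. -/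
lemma rpow_mul_exp_neg_le {p t : ℝ} (hp : 0 ≤ p) (ht : 0 ≤ t) :
    t ^ p * Real.exp (-t) ≤ p ^ p := by
  rcases eq_or_lt_of_le hp with h0 | hp'
  · rw [← h0]
    simp only [Real.rpow_zero, one_mul]
    exact Real.exp_le_one_iff.mpr (by linarith)
  · rcases eq_or_lt_of_le ht with h0t | ht'
    · rw [← h0t, Real.zero_rpow (ne_of_gt hp'), zero_mul]
      positivity
    · have hlog : Real.log (t / p) ≤ t / p - 1 := Real.log_le_sub_one_of_pos (by positivity)
      rw [Real.log_div (ne_of_gt ht') (ne_of_gt hp')] at hlog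
      have h1 : Real.log t * p - t ≤ Real.log p * p := by
        have h2 : (Real.log t - Real.log p) * p ≤ (t / p - 1) * p :=
          mul_le_mul_of_nonneg_right hlog hp
        have h3 : (t / p - 1) * p = t - p := by field_simp
        nlinarith [h2, h3]
      rw [Real.rpow_def_of_pos ht', Real.rpow_def_of_pos hp', ← Real.exp_add]
      exact Real.exp_le_exp.mpr (by linarith)

/-- `y^p e^{-cy} ≤ (p/c)^p` for `p, y ≥ 0`, `c > 0`. -/
lemma rpow_mul_exp_neg_mul_le {p c y : ℝ} (hp : 0 ≤ p) (hc : 0 < c) (hy : 0 ≤ y) :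
    y ^ p * Real.exp (-(c * y)) ≤ (p / c) ^ p := by
  have h1 : (c * y) ^ p * Real.exp (-(c * y)) ≤ p ^ p :=
    rpow_mul_exp_neg_le hp (by positivity)
  rw [Real.mul_rpow hc.le hy] at h1
  have hcp : 0 < c ^ p := Real.rpow_pos_of_pos hc p
  rw [Real.div_rpow hp hc.le, le_div_iff₀ hcp]
  nlinarith [Real.exp_pos (-(c * y)), h1]

theorem high_mode_heat_decay_and_Hs_bound (s ν : ℝ) (hs : 0 ≤ s) (hν : 0 < ν) :
    ∃ C : ℝ, 0 < C ∧
      ∀ (t₀ Λ₀ : ℝ), 0 < t₀ → 0 < Λ₀ →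
      ∀ (u : ℝ → T3 → ℂ) (v₀ : T3 → ℂ),
        MemLp v₀ 2 (volume : Measure T3) →
        (∀ τ : ℝ, MemLp (u τ) 2 (volume : Measure T3)) →
        (∀ τ : ℝ, (eLpNorm (u τ) 2 (volume : Measure T3)).toReal ≤
          (eLpNorm v₀ 2 (volume : Measure T3)).toReal) →
        (∀ ξ : Fin 3 → ℤ, 2 * Λ₀ < nrmZ ξ → ∀ τ : ℝ, t₀ ≤ τ →
          HasDerivAt (fun τ' => fc (u τ') ξ)
            (-(ν * (nrmZ ξ) ^ 2) * fc (u τ) ξ) τ) →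
        (∀ ξ : Fin 3 → ℤ, 2 * Λ₀ < nrmZ ξ → ∀ τ : ℝ, t₀ ≤ τ →
            fc (u τ) ξ =
              Complex.exp (-(ν * (nrmZ ξ) ^ 2 * (τ - t₀))) * fc (u t₀) ξ) ∧
          ∀ τ : ℝ, (3/2) * t₀ ≤ τ →
            (∑' ξ : Fin 3 → ℤ, (nrmZ ξ) ^ (2 * s) * ‖fc (u τ) ξ‖ ^ 2) ≤
              C * (Λ₀ ^ (2 * s) + t₀ ^ (-s)) *
                (eLpNorm v₀ 2 (volume : Measure T3)).toReal ^ 2 := by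
  have hC0 : (0:ℝ) < 2 ^ (2*s) + (s/ν) ^ s :=
    add_pos_of_pos_of_nonneg (Real.rpow_pos_of_pos two_pos _)
      (Real.rpow_nonneg (div_nonneg hs hν.le) s)
  refine ⟨2 ^ (2*s) + (s/ν) ^ s, hC0, ?_⟩
  intro t₀ Λ₀ ht₀ hΛ₀ u v₀ hv₀ hu hbd hder
  have part1 : ∀ ξ : Fin 3 → ℤ, 2 * Λ₀ < nrmZ ξ → ∀ τ : ℝ, t₀ ≤ τ →
      fc (u τ) ξ = Complex.exp (-(ν * (nrmZ ξ) ^ 2 * (τ - t₀))) * fc (u t₀) ξ := by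
    intro ξ hξ τ hτ
    have hODE : ∀ τ', t₀ ≤ τ' → HasDerivAt (fun τ'' => fc (u τ'') ξ)
        (-(((ν * nrmZ ξ ^ 2 : ℝ)) : ℂ) * fc (u τ') ξ) τ' := by
      intro τ' hτ'
      convert hder ξ hξ τ' hτ' using 1
      push_cast
      ring
    have h := ode_exp hODE hτ
    rw [h]
    congr 2
    push_cast
    ring
  refine ⟨part1, ?_⟩
  intro τ hτ
  set N := (eLpNorm v₀ 2 (volume : Measure T3)).toReal with hN
  have hN0 : 0 ≤ N := ENNReal.toReal_nonneg
  have hτt₀ : t₀ ≤ τ := by linarith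
  have bessel : ∀ σ : ℝ, Summable (fun ξ : Fin 3 → ℤ => ‖fc (u σ) ξ‖ ^ 2) ∧
      (∑' ξ : Fin 3 → ℤ, ‖fc (u σ) ξ‖ ^ 2) ≤ N ^ 2 := by
    intro σ
    have heq : ∀ ξ : Fin 3 → ℤ, fc (u σ) ξ = inner ℂ (EL ξ) ((hu σ).toLp (u σ)) :=
      fun ξ => fc_eq_inner _ (hu σ) ξ
    constructor
    · simp_rw [heq]
      exact EL_orthonormal.inner_products_summable _
    · have hb := EL_orthonormal.tsum_inner_products_le ((hu σ).toLp (u σ))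
      have h2 : (∑' ξ : Fin 3 → ℤ, ‖fc (u σ) ξ‖ ^ 2)
          = ∑' ξ : Fin 3 → ℤ, ‖(inner ℂ (EL ξ) ((hu σ).toLp (u σ)) : ℂ)‖ ^ 2 := by
        simp_rw [heq]
      rw [h2]
      refine hb.trans ?_
      rw [Lp.norm_toLp]
      have h3 := hbd σ
      nlinarith [ENNReal.toReal_nonneg (a := eLpNorm (u σ) 2 (volume : Measure T3))]
  set K1 : ℝ := 2 ^ (2*s) * Λ₀ ^ (2*s) with hK1
  set K2 : ℝ := (s/ν) ^ s * t₀ ^ (-s) with hK2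
  have hK1_0 : 0 ≤ K1 := mul_nonneg (Real.rpow_nonneg (by norm_num) _)
    (Real.rpow_nonneg hΛ₀.le _)
  have hK2_0 : 0 ≤ K2 := mul_nonneg (Real.rpow_nonneg (div_nonneg hs hν.le) _)
    (Real.rpow_nonneg ht₀.le _)
  have hpoint : ∀ ξ : Fin 3 → ℤ, (nrmZ ξ) ^ (2*s) * ‖fc (u τ) ξ‖ ^ 2 ≤
      K1 * ‖fc (u τ) ξ‖ ^ 2 + K2 * ‖fc (u t₀) ξ‖ ^ 2 := by
    intro ξ
    have hx0 : 0 ≤ nrmZ ξ := nrmZ_nonneg ξ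
    by_cases hcase : nrmZ ξ ≤ 2 * Λ₀
    · have h1 : (nrmZ ξ) ^ (2*s) ≤ (2*Λ₀) ^ (2*s) :=
        Real.rpow_le_rpow hx0 hcase (by positivity)
      have h2 : ((2:ℝ)*Λ₀) ^ (2*s) = K1 := by
        rw [hK1, ← Real.mul_rpow (by norm_num) hΛ₀.le]
      rw [h2] at h1
      nlinarith [sq_nonneg ‖fc (u τ) ξ‖, sq_nonneg ‖fc (u t₀) ξ‖,
        mul_le_mul_of_nonneg_right h1 (sq_nonneg ‖fc (u τ) ξ‖)]
    · push_neg at hcase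
      have hfτ := part1 ξ hcase τ hτt₀
      have hδ : (0:ℝ) < τ - t₀ := by linarith
      have hnorm : ‖fc (u τ) ξ‖ = Real.exp (-(ν * nrmZ ξ ^ 2 * (τ - t₀))) * ‖fc (u t₀) ξ‖ := by
        rw [hfτ, norm_mul]
        congr 1
        have harg : (-(↑ν * ((nrmZ ξ : ℝ) : ℂ) ^ 2 * ((τ : ℂ) - (t₀ : ℂ))))
            = ((-(ν * nrmZ ξ ^ 2 * (τ - t₀)) : ℝ) : ℂ) := by
          push_cast; ring
        rw [harg, Complex.norm_exp_ofReal]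
      have hsq : ‖fc (u τ) ξ‖ ^ 2
          = Real.exp (-((2*ν*(τ - t₀)) * nrmZ ξ ^ 2)) * ‖fc (u t₀) ξ‖ ^ 2 := by
        rw [hnorm, mul_pow, sq (Real.exp _), ← Real.exp_add]
        have h5 : (-(ν * nrmZ ξ ^ 2 * (τ - t₀)) + -(ν * nrmZ ξ ^ 2 * (τ - t₀)))
            = -((2*ν*(τ - t₀)) * nrmZ ξ ^ 2) := by ring
        rw [h5]
      have hxp : (nrmZ ξ) ^ (2*s) = (nrmZ ξ ^ 2) ^ s := by
        rw [← Real.rpow_natCast (nrmZ ξ) 2, ← Real.rpow_mul hx0]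
        norm_num
      have hkey : (nrmZ ξ ^ 2) ^ s * Real.exp (-((2*ν*(τ - t₀)) * nrmZ ξ ^ 2)) ≤ K2 := by
        have hc : (0:ℝ) < 2*ν*(τ - t₀) := by positivity
        have h1 := rpow_mul_exp_neg_mul_le hs hc (sq_nonneg (nrmZ ξ))
        refine h1.trans ?_
        have h2 : s / (2*ν*(τ - t₀)) ≤ s / (ν * t₀) := by
          rw [div_eq_mul_inv, div_eq_mul_inv]
          refine mul_le_mul_of_nonneg_left ?_ hs
          rw [inv_le_inv₀ (by positivity) (by positivity)]
          nlinarith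
        calc (s / (2*ν*(τ - t₀))) ^ s ≤ (s / (ν * t₀)) ^ s :=
              Real.rpow_le_rpow (by positivity) h2 hs
          _ = K2 := by
              rw [hK2, div_mul_eq_div_div, Real.div_rpow (div_nonneg hs hν.le) ht₀.le,
                Real.rpow_neg ht₀.le, div_eq_mul_inv]
      calc (nrmZ ξ) ^ (2*s) * ‖fc (u τ) ξ‖ ^ 2
          = ((nrmZ ξ ^ 2) ^ s * Real.exp (-((2*ν*(τ - t₀)) * nrmZ ξ ^ 2)))
              * ‖fc (u t₀) ξ‖ ^ 2 := by rw [hsq, hxp]; ring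
        _ ≤ K2 * ‖fc (u t₀) ξ‖ ^ 2 :=
              mul_le_mul_of_nonneg_right hkey (sq_nonneg _)
        _ ≤ K1 * ‖fc (u τ) ξ‖ ^ 2 + K2 * ‖fc (u t₀) ξ‖ ^ 2 := by
              nlinarith [sq_nonneg ‖fc (u τ) ξ‖, hK1_0]
  have hsummτ := (bessel τ).1
  have hsumm₀ := (bessel t₀).1
  have hb : Summable (fun ξ : Fin 3 → ℤ =>
      K1 * ‖fc (u τ) ξ‖ ^ 2 + K2 * ‖fc (u t₀) ξ‖ ^ 2) :=
    (hsummτ.mul_left K1).add (hsumm₀.mul_left K2)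
  have ha : Summable (fun ξ : Fin 3 → ℤ => (nrmZ ξ) ^ (2*s) * ‖fc (u τ) ξ‖ ^ 2) :=
    hb.of_nonneg_of_le
      (fun ξ => mul_nonneg (Real.rpow_nonneg (nrmZ_nonneg ξ) _) (sq_nonneg _)) hpoint
  have h2s := Real.rpow_nonneg (by norm_num : (0:ℝ) ≤ 2) (2*s)
  have hΛs := Real.rpow_nonneg hΛ₀.le (2*s)
  have hts := Real.rpow_nonneg ht₀.le (-s)
  have hsν := Real.rpow_nonneg (div_nonneg hs hν.le) s
  calc (∑' ξ : Fin 3 → ℤ, (nrmZ ξ) ^ (2*s) * ‖fc (u τ) ξ‖ ^ 2)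
      ≤ ∑' ξ : Fin 3 → ℤ, (K1 * ‖fc (u τ) ξ‖ ^ 2 + K2 * ‖fc (u t₀) ξ‖ ^ 2) :=
        Summable.tsum_le_tsum hpoint ha hb
    _ = K1 * (∑' ξ : Fin 3 → ℤ, ‖fc (u τ) ξ‖ ^ 2)
        + K2 * (∑' ξ : Fin 3 → ℤ, ‖fc (u t₀) ξ‖ ^ 2) := by
        rw [Summable.tsum_add (hsummτ.mul_left K1) (hsumm₀.mul_left K2), tsum_mul_left, tsum_mul_left]
    _ ≤ K1 * N ^ 2 + K2 * N ^ 2 := by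
        have b1 := (bessel τ).2
        have b2 := (bessel t₀).2
        have p1 : (0:ℝ) ≤ ∑' ξ : Fin 3 → ℤ, ‖fc (u τ) ξ‖ ^ 2 :=
          tsum_nonneg (fun _ => sq_nonneg _)
        have p2 : (0:ℝ) ≤ ∑' ξ : Fin 3 → ℤ, ‖fc (u t₀) ξ‖ ^ 2 :=
          tsum_nonneg (fun _ => sq_nonneg _)
        nlinarith [mul_le_mul_of_nonneg_left b1 hK1_0, mul_le_mul_of_nonneg_left b2 hK2_0]
    _ ≤ (2 ^ (2*s) + (s/ν) ^ s) * (Λ₀ ^ (2*s) + t₀ ^ (-s)) * N ^ 2 := by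
        rw [hK1, hK2]
        nlinarith [mul_nonneg (mul_nonneg h2s hts) (sq_nonneg N),
          mul_nonneg (mul_nonneg hsν hΛs) (sq_nonneg N)]
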